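/- The general commutation relation D_ν^n ∘ D_μ^m = D_{μ+n}^m ∘ D_{ν-m}^n holds for all ν, μ ∈ ℝ and m, n ∈ ℕ, as operators on (m+n)-times differentiable functions on (0,∞). -/

import Mathlib

open Set


/-- The Bessel operator `D_κ f (r) = f'(r) + (κ/r) f(r)`. -/
noncomputable def besselD (κ : ℝ) (f : ℝ → ℂ) : ℝ → ℂ :=
  fun r => deriv f r + ((κ / r : ℝ) : ℂ) * f r

/-- The iterated Bessel operator `D_κ^n = D_{κ-(n-1)} ∘ ⋯ ∘ D_{κ-1} ∘ D_κ`. -/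
noncomputable def besselDIter (κ : ℝ) : ℕ → (ℝ → ℂ) → (ℝ → ℂ)
  | 0, f => f
  | n + 1, f => besselD (κ - n) (besselDIter κ n f)

open Set in
lemma hasDerivAt_coeff (b r : ℝ) (hr : r ≠ 0) :
    HasDerivAt (fun x : ℝ => ((b / x : ℝ) : ℂ)) ((-(b / r ^ 2) : ℝ) : ℂ) r := by
  have h : HasDerivAt (fun x : ℝ => b / x) (-(b / r ^ 2)) r := by
    have := (hasDerivAt_inv hr).const_mul b
    simp only [div_eq_mul_inv]
    exact this.congr_deriv (by ring)
  exact h.ofReal_comp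

lemma contDiffOn_coeff (b : ℝ) (N : ℕ) :
    ContDiffOn ℝ N (fun x : ℝ => ((b / x : ℝ) : ℂ)) (Ioi (0:ℝ)) := by
  have h : ContDiffOn ℝ N (fun x : ℝ => b / x) (Ioi (0:ℝ)) :=
    (contDiffOn_const.div contDiffOn_id (fun x hx => ne_of_gt hx))
  exact Complex.ofRealCLM.contDiff.comp_contDiffOn h

lemma besselD_contDiffOn {f : ℝ → ℂ} {N : ℕ} (κ : ℝ)
    (hf : ContDiffOn ℝ (N + 1) f (Ioi 0)) :
    ContDiffOn ℝ N (besselD κ f) (Ioi 0) := by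
  have hderiv : ContDiffOn ℝ N (deriv f) (Ioi 0) := by
    have := hf.deriv_of_isOpen isOpen_Ioi (m := N) (by exact_mod_cast le_refl _)
    exact this
  exact hderiv.add ((contDiffOn_coeff κ N).mul (hf.of_le (by exact_mod_cast Nat.le_succ N)))

lemma besselDIter_contDiffOn {f : ℝ → ℂ} (κ : ℝ) (n : ℕ) {k : ℕ}
    (hf : ContDiffOn ℝ (k + n) f (Ioi 0)) :
    ContDiffOn ℝ k (besselDIter κ n f) (Ioi 0) := by
  induction n generalizing k with
  | zero => simpa [besselDIter] using hf
  | succ n ih =>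
    show ContDiffOn ℝ k (besselD (κ - n) (besselDIter κ n f)) (Ioi 0)
    have e : ((k : WithTop ℕ∞) + ↑(n + 1)) = (↑(k + 1) + (n : WithTop ℕ∞)) := by
      push_cast; ring
    exact besselD_contDiffOn _ (ih (e ▸ hf))

lemma besselD_congrOn {g h : ℝ → ℂ} (hgh : EqOn g h (Ioi 0)) (κ : ℝ) :
    EqOn (besselD κ g) (besselD κ h) (Ioi 0) := by
  intro r hr
  have he : g =ᶠ[nhds r] h := Filter.eventuallyEq_of_mem (isOpen_Ioi.mem_nhds hr) hgh
  simp only [besselD, he.deriv_eq, hgh hr]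

lemma besselDIter_congrOn {g h : ℝ → ℂ} (hgh : EqOn g h (Ioi 0)) (κ : ℝ) (n : ℕ) :
    EqOn (besselDIter κ n g) (besselDIter κ n h) (Ioi 0) := by
  induction n with
  | zero => exact hgh
  | succ n ih => exact besselD_congrOn ih _

lemma besselDIter_succ' (κ : ℝ) (n : ℕ) (f : ℝ → ℂ) :
    besselDIter κ (n + 1) f = besselDIter (κ - 1) n (besselD κ f) := by
  induction n with
  | zero => norm_num [besselDIter]
  | succ n ih =>
    show besselD (κ - (n+1 : ℕ)) (besselDIter κ (n+1) f)
        = besselD ((κ - 1) - n) (besselDIter (κ - 1) n (besselD κ f))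
    rw [ih]
    push_cast; ring

lemma bessel_swap {f : ℝ → ℂ} (hf : ContDiffOn ℝ 2 f (Ioi 0)) (a b : ℝ) :
    EqOn (besselD a (besselD b f)) (besselD (b + 1) (besselD (a - 1) f)) (Ioi 0) := by
  intro r hr
  have hr0 : (0:ℝ) < r := hr
  have hrne : r ≠ 0 := ne_of_gt hr0
  have hmem : Ioi (0:ℝ) ∈ nhds r := isOpen_Ioi.mem_nhds hr
  have hf1 : DifferentiableAt ℝ f r :=
    ((hf.differentiableOn two_ne_zero) r hr).differentiableAt hmem
  have hd : ContDiffOn ℝ 1 (deriv f) (Ioi 0) :=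
    hf.deriv_of_isOpen isOpen_Ioi (by norm_num)
  have hf2 : DifferentiableAt ℝ (deriv f) r :=
    ((hd.differentiableOn one_ne_zero) r hr).differentiableAt hmem
  have key : ∀ c : ℝ, HasDerivAt (besselD c f)
      (deriv (deriv f) r + (((-(c / r ^ 2) : ℝ) : ℂ) * f r
        + ((c / r : ℝ) : ℂ) * deriv f r)) r := fun c =>
    (hf2.hasDerivAt).add (((hasDerivAt_coeff c r hrne).mul hf1.hasDerivAt))
  have expand : ∀ c d : ℝ, besselD c (besselD d f) r =
      (deriv (deriv f) r + (((-(d / r ^ 2) : ℝ) : ℂ) * f r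
        + ((d / r : ℝ) : ℂ) * deriv f r))
      + ((c / r : ℝ) : ℂ) * (deriv f r + ((d / r : ℝ) : ℂ) * f r) := by
    intro c d
    show deriv (besselD d f) r + ((c / r : ℝ) : ℂ) * besselD d f r = _
    rw [(key d).deriv]
    rfl
  rw [expand a b, expand (b + 1) (a - 1)]
  have hrC : (r : ℂ) ≠ 0 := by exact_mod_cast hrne
  push_cast
  field_simp
  ring

lemma bessel_swap_iter (ν μ : ℝ) (m : ℕ) {f : ℝ → ℂ}
    (hf : ContDiffOn ℝ (m + 1) f (Ioi 0)) :
    EqOn (besselD ν (besselDIter μ m f))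
      (besselDIter (μ + 1) m (besselD (ν - m) f)) (Ioi 0) := by
  induction m generalizing ν μ f with
  | zero =>
    intro r hr
    show besselD ν f r = besselD (ν - (0:ℕ)) f r
    norm_num
  | succ m ih =>
    intro r hr
    rw [besselDIter_succ' μ m f]
    have hg : ContDiffOn ℝ (m + 1) (besselD μ f) (Ioi 0) :=
      besselD_contDiffOn μ hf
    have h1 := ih ν (μ - 1) hg hr
    rw [h1]
    have h2 : EqOn (besselD (ν - m) (besselD μ f))
        (besselD (μ + 1) (besselD (ν - m - 1) f)) (Ioi 0) :=
      bessel_swap (hf.of_le (by exact_mod_cast (by omega : 2 ≤ m + 1 + 1))) (ν - m) μ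
    have h3 := besselDIter_congrOn h2 (μ - 1 + 1) m hr
    rw [h3]
    rw [besselDIter_succ' (μ + 1) m (besselD (ν - (m+1:ℕ)) f)]
    have e1 : μ - 1 + 1 = μ + 1 - 1 := by ring
    have e2 : ν - m - 1 = ν - (m + 1 : ℕ) := by push_cast; ring
    rw [e1, e2]

theorem bessel_commutation_general (ν μ : ℝ) (m n : ℕ) (f : ℝ → ℂ)
    (hf : ContDiffOn ℝ (m + n) f (Set.Ioi 0)) :
    ∀ r ∈ Set.Ioi (0 : ℝ),
      besselDIter ν n (besselDIter μ m f) r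
        = besselDIter (μ + n) m (besselDIter (ν - m) n f) r := by
  induction n generalizing ν with
  | zero =>
    intro r hr
    show besselDIter μ m f r = besselDIter (μ + (0:ℕ)) m f r
    norm_num
  | succ n ih =>
    intro r hr
    have hf' : ContDiffOn ℝ (m + n) f (Ioi 0) :=
      hf.of_le (by exact_mod_cast (by omega : m + n ≤ m + (n + 1)))
    have h1 : EqOn (besselDIter ν n (besselDIter μ m f))
        (besselDIter (μ + n) m (besselDIter (ν - m) n f)) (Ioi 0) :=
      fun x hx => ih ν hf' x hx
    show besselD (ν - n) (besselDIter ν n (besselDIter μ m f)) r = _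
    rw [besselD_congrOn h1 (ν - n) hr]
    have hg : ContDiffOn ℝ (m + 1) (besselDIter (ν - m) n f) (Ioi 0) := by
      have e : ((m : WithTop ℕ∞) + ↑(n + 1)) = (↑(m + 1) + (n : WithTop ℕ∞)) := by
        push_cast; ring
      exact besselDIter_contDiffOn _ n (e ▸ hf)
    have h2 := bessel_swap_iter (ν - n) (μ + n) m hg hr
    rw [h2]
    have e1 : μ + n + 1 = μ + (n + 1 : ℕ) := by push_cast; ring
    have e2 : besselD (ν - n - m) (besselDIter (ν - m) n f)
        = besselDIter (ν - m) (n + 1) f := by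
      show _ = besselD ((ν - m) - n) (besselDIter (ν - m) n f)
      ring_nf
    rw [e1] at *
    rw [show ν - (n:ℝ) - m = ν - n - m from rfl, e2]
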